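/- Let $\phi_\epsilon : \mathbb{R} \to \mathbb{R}$ be defined by $\phi_\epsilon(z) = -\frac{1}{R_0(z)^2}\left[(b+a\omega)\int_{-\infty}^{z} R_0(s)^2\,ds + (d_1-a)\int_{-\infty}^{z} R_0(s)^4\,ds + (d_2-a\alpha)\int_{-\infty}^{z} R_0(s)^6\,ds\right]$. Then $2R_0(0)^2\,\phi_\epsilon(0) = \Lambda_2'\,a - \Lambda_2\,b - \Lambda_4\,d_1 - \Lambda_6\,d_2$. -/

import Mathlib

open MeasureTheory

lemma aux_exp_abs {k : ℝ} (hk : 0 < k) : Integrable (fun x : ℝ => Real.exp (-k * |x|)) := by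
  have hIoi : IntegrableOn (fun x : ℝ => Real.exp (-k * |x|)) (Set.Ioi 0) :=
    (exp_neg_integrableOn_Ioi 0 hk).congr_fun
      (fun x hx => by rw [abs_of_pos hx]) measurableSet_Ioi
  have hIic : IntegrableOn (fun x : ℝ => Real.exp (-k * |x|)) (Set.Iic 0) := by
    rw [← Measure.map_neg_eq_self (volume : Measure ℝ)]
    have m : MeasurableEmbedding fun x : ℝ => -x :=
      (Homeomorph.neg ℝ).measurableEmbedding
    rw [m.integrableOn_map_iff]
    simp_rw [Function.comp_def, abs_neg, Set.neg_preimage, Set.neg_Iic, neg_zero]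
    exact (integrableOn_Ici_iff_integrableOn_Ioi).mpr hIoi
  rw [← integrableOn_univ, ← Set.Iic_union_Ioi (a := (0:ℝ))]
  exact hIic.union hIoi

lemma aux_master {k : ℝ} (hk : 0 < k) {f : ℝ → ℝ} {M : ℝ} (hfc : Continuous f)
    (hb : ∀ z, |f z| ≤ M * Real.exp (-k * |z|)) : Integrable f := by
  refine Integrable.mono' ((aux_exp_abs hk).const_mul M) hfc.aestronglyMeasurable ?_
  exact ae_of_all _ fun z => by simpa [Real.norm_eq_abs] using hb z

lemma aux_sq (ω β c k s w q : ℝ) (hwpos : 0 < w) (hqne : q ≠ 0)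
    (h4 : q ^ 2 = 4 * ω / w)
    (hsh : c ^ 2 * s ^ 2 = (w - 1) ^ 2 - (1 - β))
    (hk2 : k ^ 2 = 4 * ω) :
    ((0 * w - 4 * ω * (c * (s * k))) / w ^ 2 / (2 * q)) ^ 2
      = 4 * ω ^ 2 * (w ^ 2 - 2 * w + β) / w ^ 3 := by
  have hwne := hwpos.ne'
  have hq2 : q ^ 2 * w = 4 * ω := by field_simp at h4; linarith
  field_simp
  linear_combination (16*ω^2*k^2) * hsh + (16*ω^2*(w^2-2*w+β)) * hk2
    - (16*ω^2*(w^2-2*w+β)) * hq2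

lemma aux_Fd (ω α β c k s C w : ℝ) (hwne : w ≠ 0) (hkne : k ≠ 0)
    (hch : c * C = w - 1) (hsh : c ^ 2 * s ^ 2 = (w - 1) ^ 2 - (1 - β))
    (hαω : α * ω = -3 / 16 * β) :
    -(8 * ω ^ 2 * c / k) * ((C * k * w ^ 2 - s * ((2:ℕ) * w ^ 1 * (c * (s * k)))) / (w ^ 2) ^ 2)
      = 4 * ω ^ 2 * (w ^ 2 - 2 * w + β) / w ^ 3 + ω * (4 * ω / w)
        - 16 * ω ^ 2 / w ^ 2 - α * (64 * ω ^ 3 / w ^ 3) := by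
  field_simp
  linear_combination (-8*ω^2*w) * hch + (16*ω^2) * hsh + (64*ω^2) * hαω

set_option maxHeartbeats 2000000 in
/-- With `φ_ε` as in Statement 6,
`2 R₀(0)² φ_ε(0) = Λ₂' a - Λ₂ b - Λ₄ d₁ - Λ₆ d₂`. -/
theorem stmt7 (ω α β a b d1 d2 : ℝ) (hω : 0 < ω) (hβ : β = -(16 / 3) * α * ω)
    (hβ0 : 0 ≤ β) (hβ1 : β < 1)
    (R0 : ℝ → ℝ)
    (hR0 : ∀ z : ℝ, R0 z =
      Real.sqrt (4 * ω / (1 + Real.sqrt (1 - β) * Real.cosh (2 * Real.sqrt ω * z))))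
    (φε : ℝ → ℝ)
    (hφε : ∀ z : ℝ, φε z = -(1 / (R0 z) ^ 2) *
      ((b + a * ω) * (∫ s in Set.Iic z, (R0 s) ^ 2)
        + (d1 - a) * (∫ s in Set.Iic z, (R0 s) ^ 4)
        + (d2 - a * α) * ∫ s in Set.Iic z, (R0 s) ^ 6)) :
    2 * (R0 0) ^ 2 * φε 0 =
      (∫ s : ℝ, (deriv R0 s) ^ 2) * a - (∫ s : ℝ, (R0 s) ^ 2) * b
        - (∫ s : ℝ, (R0 s) ^ 4) * d1 - (∫ s : ℝ, (R0 s) ^ 6) * d2 := by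
  have hω0 : (0:ℝ) ≤ ω := hω.le
  have hβ1' : (0:ℝ) < 1 - β := by linarith
  have hαω : α * ω = -3 / 16 * β := by rw [hβ]; ring
  set c := Real.sqrt (1 - β) with hc_def
  have hc : 0 < c := Real.sqrt_pos.2 hβ1'
  have hc2 : c ^ 2 = 1 - β := Real.sq_sqrt hβ1'.le
  set k := 2 * Real.sqrt ω with hk_def
  have hk : 0 < k := by positivity
  have hk2 : k ^ 2 = 4 * ω := by
    rw [hk_def, mul_pow, Real.sq_sqrt hω0]; ring
  set D : ℝ → ℝ := fun z => 1 + c * Real.cosh (k * z) with hD_def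
  have hD1 : ∀ z, 1 < D z := fun z => by
    have h := Real.one_le_cosh (k * z)
    simp only [hD_def]; nlinarith
  have hDpos : ∀ z, 0 < D z := fun z => lt_trans one_pos (hD1 z)
  have hDne : ∀ z, D z ≠ 0 := fun z => (hDpos z).ne'
  have hcontD : Continuous D := by
    simp only [hD_def]; fun_prop
  have hDeven : ∀ s, D (-s) = D s := fun s => by
    simp [hD_def, mul_neg, Real.cosh_neg]
  have hch : ∀ z, c * Real.cosh (k * z) = D z - 1 := fun z => by
    simp only [hD_def]; ring
  have hshz : ∀ z, c ^ 2 * Real.sinh (k * z) ^ 2 = (D z - 1) ^ 2 - (1 - β) := by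
    intro z
    have h5 := Real.sinh_sq (k * z)
    have h6 := hch z
    linear_combination c^2*h5 + (c*Real.cosh (k*z) + D z - 1)*h6 - hc2
  have hR0' : R0 = fun z => Real.sqrt (4 * ω / D z) := by
    funext z; rw [hR0 z]
  have hfpos : ∀ z, 0 < 4 * ω / D z := fun z => by positivity
  have hR0sq : ∀ z, R0 z ^ 2 = 4 * ω / D z := fun z => by
    rw [hR0']; exact Real.sq_sqrt (hfpos z).le
  have hR04 : ∀ z, R0 z ^ 4 = 16 * ω ^ 2 / (D z) ^ 2 := fun z => by
    rw [show R0 z ^ 4 = (R0 z ^ 2) ^ 2 by ring, hR0sq z, div_pow, mul_pow]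
    norm_num
  have hR06 : ∀ z, R0 z ^ 6 = 64 * ω ^ 3 / (D z) ^ 3 := fun z => by
    rw [show R0 z ^ 6 = (R0 z ^ 2) ^ 3 by ring, hR0sq z, div_pow, mul_pow]
    norm_num
  clear_value c k D
  -- derivatives
  have hlin : ∀ z : ℝ, HasDerivAt (fun z : ℝ => k * z) k z := fun z => by
    simpa using (hasDerivAt_id z).const_mul k
  have hDD : ∀ z, HasDerivAt D (c * (Real.sinh (k * z) * k)) z := by
    intro z
    simpa [hD_def] using ((hlin z).cosh.const_mul c).const_add 1
  have hRd : ∀ z, HasDerivAt R0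
      ((0 * D z - 4 * ω * (c * (Real.sinh (k * z) * k))) / (D z) ^ 2
        / (2 * Real.sqrt (4 * ω / D z))) z := by
    intro z
    rw [hR0']
    exact ((hasDerivAt_const z (4 * ω)).div (hDD z) (hDne z)).sqrt (hfpos z).ne'
  have hderiv_sq : ∀ z, (deriv R0 z) ^ 2
      = 4 * ω ^ 2 * ((D z) ^ 2 - 2 * D z + β) / (D z) ^ 3 := by
    intro z
    rw [(hRd z).deriv]
    exact aux_sq ω β c k (Real.sinh (k * z)) (D z) (Real.sqrt (4 * ω / D z))
      (hDpos z) (Real.sqrt_pos.2 (hfpos z)).ne' (Real.sq_sqrt (hfpos z).le) (hshz z) hk2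
  -- exponential bound on 1/D
  have hDexp : ∀ z, c * Real.exp (k * |z|) ≤ 2 * D z := by
    intro z
    have habs : k * |z| = |k * z| := by rw [abs_mul, abs_of_pos hk]
    have h1 : Real.exp (k * |z|) ≤ 2 * Real.cosh (k * z) := by
      rw [habs, Real.cosh_eq]
      rcases abs_cases (k * z) with ⟨h2, _⟩ | ⟨h2, _⟩ <;> rw [h2] <;>
        [linarith [Real.exp_pos (-(k * z))]; linarith [Real.exp_pos (k * z)]]
    have h3 := hch z
    nlinarith [Real.exp_pos (k * |z|)]
  have hDinv : ∀ z, (D z)⁻¹ ≤ (2 / c) * Real.exp (-(k * |z|)) := by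
    intro z
    have e1 : (0:ℝ) < Real.exp (k * |z|) := Real.exp_pos _
    have h2 : (D z)⁻¹ ≤ 2 / (c * Real.exp (k * |z|)) := by
      rw [inv_eq_one_div, div_le_div_iff₀ (hDpos z) (by positivity)]
      nlinarith [hDexp z]
    calc (D z)⁻¹ ≤ 2 / (c * Real.exp (k * |z|)) := h2
      _ = (2 / c) * Real.exp (-(k * |z|)) := by rw [Real.exp_neg]; ring
  -- master integrability lemma
  have master : ∀ (f : ℝ → ℝ) (A : ℝ), Continuous f → (∀ z, |f z| ≤ A / D z) →
      Integrable f := by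
    intro f A hfc hfb
    have hA : 0 ≤ A := by
      have h0 := (abs_nonneg (f 0)).trans (hfb 0)
      rcases div_nonneg_iff.mp h0 with ⟨h, _⟩ | ⟨_, h⟩
      · exact h
      · linarith [hDpos 0]
    refine aux_master hk hfc (M := A * (2 / c)) ?_
    intro z
    calc |f z| ≤ A / D z := hfb z
      _ = A * (D z)⁻¹ := by rw [div_eq_mul_inv]
      _ ≤ A * ((2 / c) * Real.exp (-(k * |z|))) :=
          mul_le_mul_of_nonneg_left (hDinv z) hA
      _ = A * (2 / c) * Real.exp (-k * |z|) := by rw [neg_mul]; ring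
  -- integrability of the four integrands
  have hint1 : Integrable (fun z => 4 * ω / D z) := by
    refine master _ (4 * ω) (continuous_const.div hcontD hDne) fun z => ?_
    rw [abs_of_nonneg (hfpos z).le]
  have hint2 : Integrable (fun z => 16 * ω ^ 2 / (D z) ^ 2) := by
    refine master _ (16 * ω ^ 2)
      (continuous_const.div (hcontD.pow 2) fun z => pow_ne_zero 2 (hDne z)) fun z => ?_
    rw [abs_of_nonneg (div_nonneg (by positivity) (pow_pos (hDpos z) 2).le),
      div_le_div_iff₀ (pow_pos (hDpos z) 2) (hDpos z)]
    nlinarith [mul_nonneg (mul_nonneg (by positivity : (0:ℝ) ≤ 16 * ω ^ 2) (hDpos z).le)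
      (by linarith [hD1 z] : (0:ℝ) ≤ D z - 1)]
  have hint3 : Integrable (fun z => 64 * ω ^ 3 / (D z) ^ 3) := by
    refine master _ (64 * ω ^ 3)
      (continuous_const.div (hcontD.pow 3) fun z => pow_ne_zero 3 (hDne z)) fun z => ?_
    rw [abs_of_nonneg (div_nonneg (by positivity) (pow_pos (hDpos z) 3).le),
      div_le_div_iff₀ (pow_pos (hDpos z) 3) (hDpos z)]
    nlinarith [mul_nonneg (mul_nonneg (mul_nonneg
      (by positivity : (0:ℝ) ≤ 64 * ω ^ 3) (hDpos z).le)
      (by linarith [hD1 z] : (0:ℝ) ≤ D z - 1)) (by linarith [hDpos z] : (0:ℝ) ≤ D z + 1)]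
  have hnum_nonneg : ∀ z, 0 ≤ (D z) ^ 2 - 2 * D z + β := by
    intro z
    have h1 := hshz z
    nlinarith [sq_nonneg (c * Real.sinh (k * z)), hc2]
  have hintE : Integrable (fun z => 4 * ω ^ 2 * ((D z) ^ 2 - 2 * D z + β) / (D z) ^ 3) := by
    have hcnum : Continuous fun z => 4 * ω ^ 2 * ((D z) ^ 2 - 2 * D z + β) := by
      fun_prop
    refine master _ (4 * ω ^ 2)
      (hcnum.div (hcontD.pow 3) fun z => pow_ne_zero 3 (hDne z)) fun z => ?_
    rw [abs_of_nonneg (div_nonneg (mul_nonneg (by positivity) (hnum_nonneg z))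
      (pow_pos (hDpos z) 3).le), div_le_div_iff₀ (pow_pos (hDpos z) 3) (hDpos z)]
    nlinarith [mul_nonneg (mul_nonneg (by positivity : (0:ℝ) ≤ 4 * ω ^ 2) (hDpos z).le)
      (by linarith [hD1 z, hβ1] : (0:ℝ) ≤ 2 * D z - β)]
  -- the function F and its derivative
  set F : ℝ → ℝ := fun z => -(8 * ω ^ 2 * c / k) * (Real.sinh (k * z) / (D z) ^ 2)
    with hF_def
  set φfun : ℝ → ℝ := fun z => 4 * ω ^ 2 * ((D z) ^ 2 - 2 * D z + β) / (D z) ^ 3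
      + ω * (4 * ω / D z) - 16 * ω ^ 2 / (D z) ^ 2 - α * (64 * ω ^ 3 / (D z) ^ 3)
    with hφfun_def
  have hFd : ∀ z, HasDerivAt F (φfun z) z := by
    intro z
    have h := ((hlin z).sinh.div ((hDD z).pow 2)
      (pow_ne_zero 2 (hDne z))).const_mul (-(8 * ω ^ 2 * c / k))
    have he := aux_Fd ω α β c k (Real.sinh (k * z)) (Real.cosh (k * z)) (D z)
      (hDne z) hk.ne' (hch z) (hshz z) hαω
    rw [hφfun_def]
    simp only [hF_def]
    exact h.congr_deriv (by simp only [Pi.pow_apply]; rw [← he])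
  have hφint : Integrable φfun := by
    rw [hφfun_def]
    exact ((hintE.add (hint1.const_mul ω)).sub hint2).sub (hint3.const_mul α)
  -- limits of F at ±∞
  have hFb : ∀ z, ‖F z‖ ≤ (16 * ω ^ 2 / (c * k)) * Real.exp (-k * |z|) := by
    intro z
    have h1 : |Real.sinh (k * z)| ≤ Real.cosh (k * z) := by
      rw [Real.abs_sinh, ← Real.cosh_abs (k * z)]
      nlinarith [Real.sinh_sq |k * z|, Real.cosh_pos |k * z|, Real.sinh_sq (|k * z|)]
    have h5 : c * |Real.sinh (k * z)| ≤ D z := by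
      have := hch z
      nlinarith [hD1 z, hc]
    have h3 := hDexp z
    have e1 : (0:ℝ) < Real.exp (k * |z|) := Real.exp_pos _
    have habs : ‖F z‖ = (8 * ω ^ 2 * c / k) * (|Real.sinh (k * z)| / (D z) ^ 2) := by
      simp only [hF_def]
      rw [Real.norm_eq_abs, abs_mul, abs_neg, abs_of_nonneg (by positivity : (0:ℝ) ≤ 8 * ω ^ 2 * c / k),
        abs_div, abs_of_pos (pow_pos (hDpos z) 2)]
    rw [habs, neg_mul, Real.exp_neg,
      show (8 * ω ^ 2 * c / k) * (|Real.sinh (k * z)| / (D z) ^ 2)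
        = (8 * ω ^ 2 * c * |Real.sinh (k * z)|) / (k * (D z) ^ 2) from by ring,
      show (16 * ω ^ 2 / (c * k)) * (Real.exp (k * |z|))⁻¹
        = (16 * ω ^ 2) / (c * k * Real.exp (k * |z|)) from by ring,
      div_le_div_iff₀ (mul_pos hk (pow_pos (hDpos z) 2)) (by positivity)]
    have h6 : (c * |Real.sinh (k * z)|) * (c * Real.exp (k * |z|)) ≤ D z * (2 * D z) :=
      mul_le_mul h5 h3 (by positivity) (hDpos z).le
    nlinarith [mul_le_mul_of_nonneg_left h6 (by positivity : (0:ℝ) ≤ 8 * ω ^ 2 * k)]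
  have hexp_top : Filter.Tendsto (fun z : ℝ => (16 * ω ^ 2 / (c * k)) * Real.exp (-k * |z|))
      Filter.atTop (nhds 0) := by
    have h1 : Filter.Tendsto (fun z : ℝ => k * |z|) Filter.atTop Filter.atTop :=
      Filter.tendsto_abs_atTop_atTop.const_mul_atTop hk
    have h2 := Real.tendsto_exp_neg_atTop_nhds_zero.comp h1
    have h3 : Filter.Tendsto (fun z : ℝ => Real.exp (-k * |z|)) Filter.atTop (nhds 0) := by
      simpa [Function.comp_def, neg_mul] using h2
    simpa using h3.const_mul (16 * ω ^ 2 / (c * k))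
  have hexp_bot : Filter.Tendsto (fun z : ℝ => (16 * ω ^ 2 / (c * k)) * Real.exp (-k * |z|))
      Filter.atBot (nhds 0) := by
    have h1 : Filter.Tendsto (fun z : ℝ => k * |z|) Filter.atBot Filter.atTop :=
      Filter.tendsto_abs_atBot_atTop.const_mul_atTop hk
    have h2 := Real.tendsto_exp_neg_atTop_nhds_zero.comp h1
    have h3 : Filter.Tendsto (fun z : ℝ => Real.exp (-k * |z|)) Filter.atBot (nhds 0) := by
      simpa [Function.comp_def, neg_mul] using h2
    simpa using h3.const_mul (16 * ω ^ 2 / (c * k))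
  have hFtop : Filter.Tendsto F Filter.atTop (nhds 0) := squeeze_zero_norm hFb hexp_top
  have hFbot : Filter.Tendsto F Filter.atBot (nhds 0) := squeeze_zero_norm hFb hexp_bot
  have hF0 : F 0 = 0 := by simp [hF_def]
  -- the key zero integral
  have hIoi : ∫ z in Set.Ioi 0, φfun z = 0 - F 0 :=
    integral_Ioi_of_hasDerivAt_of_tendsto' (fun x _ => hFd x) hφint.integrableOn hFtop
  have hIic : ∫ z in Set.Iic 0, φfun z = F 0 - 0 :=
    integral_Iic_of_hasDerivAt_of_tendsto' (fun x _ => hFd x) hφint.integrableOn hFbot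
  have hzero : ∫ z, φfun z = 0 := by
    rw [← intervalIntegral.integral_Iic_add_Ioi hφint.integrableOn hφint.integrableOn, hIoi, hIic, hF0]
    ring
  have hkey : (∫ z, 4 * ω ^ 2 * ((D z) ^ 2 - 2 * D z + β) / (D z) ^ 3)
      + ω * (∫ z, 4 * ω / D z) - (∫ z, 16 * ω ^ 2 / (D z) ^ 2)
      - α * (∫ z, 64 * ω ^ 3 / (D z) ^ 3) = 0 := by
    have I2 : Integrable (fun z => ω * (4 * ω / D z)) := hint1.const_mul ω
    have I3 : Integrable (fun z => α * (64 * ω ^ 3 / (D z) ^ 3)) := hint3.const_mul α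
    have I12 : Integrable (fun z => 4 * ω ^ 2 * ((D z) ^ 2 - 2 * D z + β) / (D z) ^ 3
        + ω * (4 * ω / D z)) := hintE.add I2
    have I123 : Integrable (fun z => 4 * ω ^ 2 * ((D z) ^ 2 - 2 * D z + β) / (D z) ^ 3
        + ω * (4 * ω / D z) - 16 * ω ^ 2 / (D z) ^ 2) := I12.sub hint2
    simp only [hφfun_def] at hzero
    rw [integral_sub I123 I3, integral_sub I12 hint2, integral_add hintE I2,
      integral_const_mul, integral_const_mul] at hzero
    exact hzero
  -- halving by evenness
  have half : ∀ g : ℝ → ℝ, Integrable g → (∀ s, g (-s) = g s) →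
      ∫ s in Set.Iic 0, g s = (1 / 2) * ∫ s, g s := by
    intro g hg hge
    have h1 : ∫ s in Set.Iic (0:ℝ), g s = ∫ s in Set.Ioi (0:ℝ), g s := by
      have h0 : ∫ s in Set.Iic (0:ℝ), g s = ∫ s in Set.Iic (0:ℝ), g (-s) := by
        simp_rw [hge]
      rw [h0, integral_comp_neg_Iic, neg_zero]
    have h2 := intervalIntegral.integral_Iic_add_Ioi (b := (0:ℝ)) hg.integrableOn hg.integrableOn
    linarith
  have hh1 : ∫ s in Set.Iic (0:ℝ), 4 * ω / D s = (1 / 2) * ∫ s, 4 * ω / D s :=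
    half _ hint1 fun s => by rw [hDeven]
  have hh2 : ∫ s in Set.Iic (0:ℝ), 16 * ω ^ 2 / (D s) ^ 2
      = (1 / 2) * ∫ s, 16 * ω ^ 2 / (D s) ^ 2 :=
    half _ hint2 fun s => by rw [hDeven]
  have hh3 : ∫ s in Set.Iic (0:ℝ), 64 * ω ^ 3 / (D s) ^ 3
      = (1 / 2) * ∫ s, 64 * ω ^ 3 / (D s) ^ 3 :=
    half _ hint3 fun s => by rw [hDeven]
  -- final assembly
  rw [hφε 0]
  simp_rw [hderiv_sq, hR0sq, hR04, hR06]
  rw [hh1, hh2, hh3]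
  have hA : (4 * ω / D 0) ≠ 0 := (hfpos 0).ne'
  have hsimp : ∀ X : ℝ, 2 * (4 * ω / D 0) * (-(1 / (4 * ω / D 0)) * X) = -2 * X := by
    intro X
    have h1 := hDne 0
    have h2 := hω.ne'
    field_simp
  rw [hsimp]
  linear_combination (-a) * hkey
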